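/- Let φ be a continuous flow without singular points on a compact metric space X. Then φ is positive expansive if and only if for every ε > 0 there is δ > 0 such that whenever x, y ∈ X satisfy d_F(x,y) < δ, then y = φ_s x for some s with |s| ≤ ε. -/

import Mathlib

open Metric Set

/-- A continuous flow on `X`. -/
def IsFlow {X : Type*} [TopologicalSpace X] (φ : ℝ → X → X) : Prop :=
  Continuous (fun p : ℝ × X => φ p.1 p.2) ∧
  (∀ x, φ 0 x = x) ∧
  (∀ s t x, φ (s + t) x = φ s (φ t x))

/-- A singular point of the flow (an equilibrium). -/
def IsSingular {X : Type*} (φ : ℝ → X → X) (x : X) : Prop := ∀ t : ℝ, φ t x = x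

/-- A reparameterization: an increasing homeomorphism of `ℝ` fixing `0`. -/
def Reparam (h : ℝ → ℝ) : Prop :=
  StrictMono h ∧ Continuous h ∧ Function.Surjective h ∧ h 0 = 0

/-- A reparameterization with rests: continuous, surjective, non-decreasing, fixing `0`. -/
def ReparamRest (h : ℝ → ℝ) : Prop :=
  Monotone h ∧ Continuous h ∧ Function.Surjective h ∧ h 0 = 0

/-- Positive expansiveness in the sense of Bowen–Walters. -/
def PosExpansive {X : Type*} [MetricSpace X] (φ : ℝ → X → X) : Prop :=
  ∀ ε > (0 : ℝ), ∃ δ > (0 : ℝ), ∀ x y : X, ∀ h : ℝ → ℝ, Reparam h →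
    (∀ t ≥ (0 : ℝ), dist (φ (h t) x) (φ t y) < δ) →
    ∃ s : ℝ, |s| ≤ ε ∧ y = φ s x

/-- The orbit of a point under the flow. -/
def flowOrbit {X : Type*} (φ : ℝ → X → X) (x : X) : Set X := Set.range fun t => φ t x

/-- The Fréchet distance between the positive trajectories of two points:
`d_F(x,y) = inf over pairs of reparameterizations with rests of sup over t ≥ 0`. -/
noncomputable def frechetDist {X : Type*} [MetricSpace X] (φ : ℝ → X → X) (x y : X) : ℝ :=
  ⨅ g : {g : (ℝ → ℝ) × (ℝ → ℝ) // ReparamRest g.1 ∧ ReparamRest g.2},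
    ⨆ t : Set.Ici (0 : ℝ), dist (φ ((g : (ℝ → ℝ) × (ℝ → ℝ)).1 (t : ℝ)) x)
      (φ ((g : (ℝ → ℝ) × (ℝ → ℝ)).2 (t : ℝ)) y)

lemma reparamRest_id' : ReparamRest (id : ℝ → ℝ) :=
  ⟨monotone_id, continuous_id, Function.surjective_id, rfl⟩

/-- Uniform smallness of the flow displacement for small times, by compactness. -/
lemma flow_small_displacement {X : Type*} [MetricSpace X] [CompactSpace X]
    (φ : ℝ → X → X) (hc : Continuous (fun p : ℝ × X => φ p.1 p.2))
    (h0 : ∀ x, φ 0 x = x) {η : ℝ} (hη : 0 < η) :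
    ∃ r₀ > (0 : ℝ), ∀ (u : X) (t : ℝ), |t| ≤ r₀ → dist (φ t u) u < η := by
  set n : Set (ℝ × X) := {p : ℝ × X | dist (φ p.1 p.2) p.2 < η} with hn
  have hopen : IsOpen n := isOpen_lt (hc.dist continuous_snd) continuous_const
  have hsub : ({0} : Set ℝ) ×ˢ (univ : Set X) ⊆ n := by
    rintro ⟨t, u⟩ ⟨ht, -⟩
    simp only [mem_singleton_iff] at ht
    simp only [hn, mem_setOf_eq, ht, h0, dist_self]
    exact hη
  obtain ⟨u, v, hu, -, h0u, hv, huv⟩ :=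
    generalized_tube_lemma isCompact_singleton isCompact_univ hopen hsub
  obtain ⟨r, hr, hball⟩ := Metric.isOpen_iff.1 hu 0 (h0u rfl)
  refine ⟨r / 2, by linarith, fun z t ht => ?_⟩
  have htu : t ∈ u := by
    apply hball
    simp only [Metric.mem_ball, Real.dist_eq, sub_zero]
    calc |t| ≤ r / 2 := ht
    _ < r := by linarith
  have : (t, z) ∈ n := huv ⟨htu, hv (mem_univ z)⟩
  exact this

/-- Upgrade a reparameterization with rests to a strict reparameterization by adding a
small bounded strictly monotone perturbation. -/
lemma reparamRest_perturb {g : ℝ → ℝ} (hg : ReparamRest g) {r : ℝ} (hr : 0 < r) :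
    Reparam (fun t => g t + r / 2 * Real.arctan t) := by
  obtain ⟨hmono, hcont, hsurj, h0⟩ := hg
  have hp : StrictMono fun t : ℝ => r / 2 * Real.arctan t :=
    Real.arctan_strictMono.const_mul (by linarith)
  have hbound : ∀ t : ℝ, |r / 2 * Real.arctan t| ≤ r := by
    intro t
    rw [abs_mul, abs_of_pos (by linarith : (0:ℝ) < r / 2)]
    have h1 : |Real.arctan t| ≤ Real.pi / 2 :=
      abs_le.2 ⟨(Real.neg_pi_div_two_lt_arctan t).le, (Real.arctan_lt_pi_div_two t).le⟩
    have h2 : Real.pi ≤ 4 := Real.pi_le_four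
    nlinarith
  constructor
  · exact fun a b hab => by
      have := hp hab
      have := hmono hab.le
      dsimp only at *
      linarith
  refine ⟨hcont.add (continuous_const.mul Real.continuous_arctan), ?_, by
    simp [h0, Real.arctan_zero]⟩
  apply Continuous.surjective (hcont.add (continuous_const.mul Real.continuous_arctan))
  · have htop : Filter.Tendsto g Filter.atTop Filter.atTop :=
      hmono.tendsto_atTop_atTop fun b => ⟨(hsurj b).choose, ((hsurj b).choose_spec).ge⟩
    refine Filter.tendsto_atTop_mono (fun t => ?_)
      (Filter.tendsto_atTop_add_const_right _ (-r) htop)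
    have := hbound t
    have := abs_le.1 this
    simp only [Pi.add_apply, Pi.mul_apply]
    linarith [this.1]
  · have hbot : Filter.Tendsto g Filter.atBot Filter.atBot :=
      hmono.tendsto_atBot_atBot fun b => ⟨(hsurj b).choose, ((hsurj b).choose_spec).le⟩
    refine Filter.tendsto_atBot_mono (fun t => ?_)
      (Filter.tendsto_atBot_add_const_right _ r hbot)
    have := abs_le.1 (hbound t)
    simp only [Pi.add_apply, Pi.mul_apply]
    linarith [this.2]

/-- A flow without singular points is positive expansive iff for all `ε > 0` there is
`δ > 0` such that points at Fréchet distance less than `δ` lie in an `ε`-orbit segment. -/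
theorem posExpansive_iff_frechet
    {X : Type*} [MetricSpace X] [CompactSpace X] (φ : ℝ → X → X)
    (hφ : IsFlow φ) (hns : ∀ x : X, ¬ IsSingular φ x) :
    PosExpansive φ ↔
      ∀ ε > (0 : ℝ), ∃ δ > (0 : ℝ), ∀ x y : X, frechetDist φ x y < δ →
        ∃ s : ℝ, |s| ≤ ε ∧ y = φ s x := by
  obtain ⟨hc, h0, hadd⟩ := hφ
  have hBddX : Bornology.IsBounded (univ : Set X) := isCompact_univ.isBounded
  have hbddAbove : ∀ (f : Set.Ici (0:ℝ) → ℝ), (∀ i, ∃ a b : X, f i = dist a b) →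
      BddAbove (Set.range f) := by
    intro f hf
    refine ⟨Metric.diam (univ : Set X), ?_⟩
    rintro z ⟨i, rfl⟩
    obtain ⟨a, b, hab⟩ := hf i
    rw [hab]
    exact Metric.dist_le_diam_of_mem hBddX (mem_univ a) (mem_univ b)
  have hne : Nonempty {g : (ℝ → ℝ) × (ℝ → ℝ) // ReparamRest g.1 ∧ ReparamRest g.2} :=
    ⟨⟨(id, id), reparamRest_id', reparamRest_id'⟩⟩
  constructor
  · -- PosExpansive → Fréchet condition
    intro hpe ε hε
    obtain ⟨δ, hδ, H⟩ := hpe ε hε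
    refine ⟨δ / 2, by linarith, fun x y hxy => ?_⟩
    obtain ⟨⟨⟨g₁, g₂⟩, hg₁, hg₂⟩, hsup⟩ := exists_lt_of_ciInf_lt hxy
    simp only at hsup
    have hpt : ∀ s : ℝ, 0 ≤ s → dist (φ (g₁ s) x) (φ (g₂ s) y) < δ / 2 := by
      intro s hs
      refine lt_of_le_of_lt ?_ hsup
      exact le_ciSup (f := fun t : Set.Ici (0:ℝ) => dist (φ (g₁ (t:ℝ)) x) (φ (g₂ (t:ℝ)) y))
        (hbddAbove _ fun i => ⟨_, _, rfl⟩) (⟨s, hs⟩ : Set.Ici (0:ℝ))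
    obtain ⟨r₀, hr₀, hsm⟩ := flow_small_displacement φ hc h0 (by linarith : (0:ℝ) < δ / 4)
    set p : ℝ → ℝ := fun t => r₀ / 2 * Real.arctan t with hp
    have hpbound : ∀ t : ℝ, |p t| ≤ r₀ := by
      intro t
      rw [hp]
      simp only
      rw [abs_mul, abs_of_pos (by linarith : (0:ℝ) < r₀ / 2)]
      have h1 : |Real.arctan t| ≤ Real.pi / 2 :=
        abs_le.2 ⟨(Real.neg_pi_div_two_lt_arctan t).le, (Real.arctan_lt_pi_div_two t).le⟩
      nlinarith [Real.pi_le_four]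
    have hh₁ : Reparam (fun t => g₁ t + p t) := reparamRest_perturb hg₁ hr₀
    have hh₂ : Reparam (fun t => g₂ t + p t) := reparamRest_perturb hg₂ hr₀
    obtain ⟨h₂s, h₂c, h₂surj, h₂0⟩ := hh₂
    set e : ℝ ≃o ℝ := StrictMono.orderIsoOfSurjective _ h₂s h₂surj with he
    have hecoe : ∀ s : ℝ, e s = g₂ s + p s := fun s => by
      rw [he, StrictMono.coe_orderIsoOfSurjective]
    have hk0 : e.symm 0 = 0 := by
      rw [OrderIso.symm_apply_eq, hecoe 0]
      exact (by simpa using h₂0 : g₂ 0 + p 0 = 0).symm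
    set h : ℝ → ℝ := fun t => g₁ (e.symm t) + p (e.symm t) with hh
    have hrep : Reparam h := by
      refine ⟨hh₁.1.comp e.symm.strictMono, hh₁.2.1.comp e.symm.continuous,
        hh₁.2.2.1.comp e.symm.surjective, ?_⟩
      rw [hh]; simp only [hk0]
      exact hh₁.2.2.2
    refine H x y h hrep ?_
    intro t ht
    set s : ℝ := e.symm t with hs
    have hse : g₂ s + p s = t := by rw [← hecoe s, hs, OrderIso.apply_symm_apply]
    have hs0 : 0 ≤ s := by
      rw [hs, ← hk0]
      exact e.symm.monotone ht
    have key : dist (φ (g₁ s + p s) x) (φ (g₂ s + p s) y) < δ := by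
      rw [add_comm (g₁ s) (p s), add_comm (g₂ s) (p s), hadd, hadd]
      calc dist (φ (p s) (φ (g₁ s) x)) (φ (p s) (φ (g₂ s) y))
          ≤ dist (φ (p s) (φ (g₁ s) x)) (φ (g₁ s) x) +
            dist (φ (g₁ s) x) (φ (g₂ s) y) +
            dist (φ (g₂ s) y) (φ (p s) (φ (g₂ s) y)) := by
            exact dist_triangle4 _ _ _ _
        _ < δ / 4 + δ / 2 + δ / 4 := by
            have h1 := hsm (φ (g₁ s) x) (p s) (hpbound s)
            have h2 := hsm (φ (g₂ s) y) (p s) (hpbound s)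
            have h2' : dist (φ (g₂ s) y) (φ (p s) (φ (g₂ s) y)) < δ / 4 := by
              rw [dist_comm]; exact h2
            have h3 := hpt s hs0
            linarith
        _ = δ := by ring
    calc dist (φ (h t) x) (φ t y) = dist (φ (g₁ s + p s) x) (φ (g₂ s + p s) y) := by
          rw [hh, hse]
      _ < δ := key
  · -- Fréchet condition → PosExpansive
    intro H ε hε
    obtain ⟨δ, hδ, H'⟩ := H ε hε
    refine ⟨δ / 2, by linarith, fun x y h hrep hclose => ?_⟩
    apply H' x y
    have hrr : ReparamRest h := ⟨hrep.1.monotone, hrep.2.1, hrep.2.2.1, hrep.2.2.2⟩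
    have hle : frechetDist φ x y ≤
        ⨆ t : Set.Ici (0:ℝ), dist (φ (h (t:ℝ)) x) (φ (id (t:ℝ)) y) := by
      have hbdd : BddBelow (Set.range fun g :
          {g : (ℝ → ℝ) × (ℝ → ℝ) // ReparamRest g.1 ∧ ReparamRest g.2} =>
          ⨆ t : Set.Ici (0:ℝ), dist (φ ((g : (ℝ → ℝ) × (ℝ → ℝ)).1 (t:ℝ)) x)
            (φ ((g : (ℝ → ℝ) × (ℝ → ℝ)).2 (t:ℝ)) y)) := by
        refine ⟨0, ?_⟩
        rintro z ⟨g, rfl⟩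
        exact Real.iSup_nonneg fun i => dist_nonneg
      exact ciInf_le hbdd (⟨(h, id), hrr, reparamRest_id'⟩ :
        {g : (ℝ → ℝ) × (ℝ → ℝ) // ReparamRest g.1 ∧ ReparamRest g.2})
    have hsup : (⨆ t : Set.Ici (0:ℝ), dist (φ (h (t:ℝ)) x) (φ (id (t:ℝ)) y)) ≤ δ / 2 := by
      refine ciSup_le fun t => ?_
      exact (hclose (t : ℝ) t.2).le
    calc frechetDist φ x y ≤ _ := hle
      _ ≤ δ / 2 := hsup
      _ < δ := by linarith
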